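/- Let X be an infinite Hausdorff space, f a continuous selection for F(X) with p = f(X) a cut point of X, and suppose X is totally disconnected at p. If {p} is a countable intersection of clopen subsets of X, then p is countably-approachable. -/

import Mathlib

open Set Filter Topology

/-- The hyperspace of all nonempty closed subsets of `X`. -/
def HypF (X : Type*) [TopologicalSpace X] : Type _ :=
  {S : Set X // S.Nonempty ∧ IsClosed S}

variable {X : Type*} [TopologicalSpace X]

namespace HypF

/-- The Vietoris topology on `HypF X`, generated by the canonical basic sets
`⟨𝒱⟩ = {S | S ⊆ ⋃𝒱 ∧ ∀ V ∈ 𝒱, S ∩ V ≠ ∅}` where `𝒱` runs over the finite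
families of open subsets of `X`. -/
instance : TopologicalSpace (HypF X) :=
  TopologicalSpace.generateFrom
    {B : Set (HypF X) | ∃ 𝒱 : Finset (Set X), (∀ V ∈ 𝒱, IsOpen V) ∧
      B = {S : HypF X | S.1 ⊆ (⋃ V ∈ 𝒱, V) ∧ ∀ V ∈ 𝒱, (S.1 ∩ V).Nonempty}}

/-- The hyperspace is partially ordered by set-theoretic inclusion. -/
instance : PartialOrder (HypF X) :=
  PartialOrder.lift Subtype.val Subtype.coe_injective

/-- The whole space `X` as an element of its hyperspace. -/
def top (X : Type*) [TopologicalSpace X] [Nonempty X] : HypF X :=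
  ⟨univ, univ_nonempty, isClosed_univ⟩

/-- The union of two members of the hyperspace. -/
def union (T S : HypF X) : HypF X :=
  ⟨T.1 ∪ S.1, T.2.1.mono subset_union_left, T.2.2.union S.2.2⟩

end HypF

/-- A continuous selection for the Vietoris hyperspace `HypF X`. -/
def IsContinuousSelection (f : HypF X → X) : Prop :=
  Continuous f ∧ ∀ S : HypF X, f S ∈ S.1

/-- `p` is a cut point of `X`: `X \ {p} = U ∪ V` with `cl U ∩ cl V = {p}`. -/
def IsCutPoint (p : X) : Prop :=
  ∃ U V : Set X, ({p}ᶜ : Set X) = U ∪ V ∧ closure U ∩ closure V = {p}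

/-- `p` is a butterfly point of `X`. -/
def IsButterflyPoint (p : X) : Prop :=
  ∃ F G : Set X, IsClosed F ∧ IsClosed G ∧
    closure (F \ {p}) ∩ closure (G \ {p}) = {p}

/-- `X` is totally disconnected at `p`: `{p}` is an intersection of clopen sets. -/
def TotallyDisconnectedAt (p : X) : Prop :=
  ∃ 𝒞 : Set (Set X), (∀ C ∈ 𝒞, IsClopen C) ∧ ⋂₀ 𝒞 = {p}

/-- `y` has a countable base of clopen neighbourhoods in `Y`. -/
def HasCountableClopenBase {Y : Type*} [TopologicalSpace Y] (y : Y) : Prop :=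
  ∃ ℬ : Set (Set Y), ℬ.Countable ∧ (∀ B ∈ ℬ, IsClopen B ∧ y ∈ B) ∧
    ∀ W : Set Y, IsOpen W → y ∈ W → ∃ B ∈ ℬ, B ⊆ W

/-- `p` is countably-approachable: it is isolated, or it has a countable clopen
base in `cl U` for some open `U ⊆ X \ {p}` with `cl U = U ∪ {p}`. -/
def CountablyApproachable (p : X) : Prop :=
  IsOpen ({p} : Set X) ∨
    ∃ U : Set X, IsOpen U ∧ U ⊆ ({p}ᶜ : Set X) ∧ closure U = U ∪ {p} ∧
      ∀ hp : p ∈ closure U, HasCountableClopenBase (⟨p, hp⟩ : closure U)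

/-- `p` is selection maximal: some continuous selection `f` satisfies `f S = p`
whenever `p ∈ S`. -/
def SelectionMaximal (p : X) : Prop :=
  ∃ f : HypF X → X, IsContinuousSelection f ∧ ∀ S : HypF X, p ∈ S.1 → f S = p

/-- `ℬ` is a local base at `p`. -/
def IsLocalBaseAt (p : X) (ℬ : Set (Set X)) : Prop :=
  (∀ B ∈ ℬ, IsOpen B ∧ p ∈ B) ∧
    ∀ W : Set X, IsOpen W → p ∈ W → ∃ B ∈ ℬ, B ⊆ W

/-- `X_Θ`: the set of values `f(X)` of continuous selections for `HypF X`. -/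
def thetaSet (X : Type*) [TopologicalSpace X] [Nonempty X] : Set X :=
  {p | ∃ f : HypF X → X, IsContinuousSelection f ∧ f (HypF.top X) = p}

/-- `X_Ω`: the set of countably-approachable points of `X`. -/
def omegaSet (X : Type*) [TopologicalSpace X] : Set X :=
  {p | CountablyApproachable p}

/-- `X_Θ*`: the selection maximal points of `X_Θ`. -/
def thetaStarSet (X : Type*) [TopologicalSpace X] [Nonempty X] : Set X :=
  {p ∈ thetaSet X | SelectionMaximal p}

/-- `X_Ω*`: the points of `X_Ω` with a countable clopen base in `X`. -/
def omegaStarSet (X : Type*) [TopologicalSpace X] : Set X :=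
  {p ∈ omegaSet X | HasCountableClopenBase p}

/-- `F₂(X)`: the subsets of `X` with at least one and at most two points. -/
def HypF2 (X : Type*) : Type _ := {S : Set X // ∃ x y : X, S = {x, y}}

/-- The Vietoris topology on `HypF2 X`. -/
instance : TopologicalSpace (HypF2 X) :=
  TopologicalSpace.generateFrom
    {B : Set (HypF2 X) | ∃ 𝒱 : Finset (Set X), (∀ V ∈ 𝒱, IsOpen V) ∧
      B = {S : HypF2 X | S.1 ⊆ (⋃ V ∈ 𝒱, V) ∧ ∀ V ∈ 𝒱, (S.1 ∩ V).Nonempty}}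

/-- The unordered pair `{x, y}` as an element of `HypF2 X`. -/
def pairF {X : Type*} (x y : X) : HypF2 X := ⟨{x, y}, x, y, rfl⟩

/-- A weak selection for `X`. -/
def IsWeakSelection {X : Type*} (σ : HypF2 X → X) : Prop := ∀ S : HypF2 X, σ S ∈ S.1

/-- The strict relation `x <_σ y` generated by a weak selection `σ`. -/
def wsLT {X : Type*} (σ : HypF2 X → X) (x y : X) : Prop := σ (pairF x y) = x ∧ x ≠ y

namespace Stmt14

/-- The generating family of the Vietoris topology. -/
def vgen (X : Type*) [TopologicalSpace X] : Set (Set (HypF X)) :=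
  {B : Set (HypF X) | ∃ 𝒱 : Finset (Set X), (∀ V ∈ 𝒱, IsOpen V) ∧
      B = {S : HypF X | S.1 ⊆ (⋃ V ∈ 𝒱, V) ∧ ∀ V ∈ 𝒱, (S.1 ∩ V).Nonempty}}

/-- Every open set in the hyperspace contains, around each of its points, a finite
intersection of generators. -/
lemma exists_basic {T : Set (HypF X)} (hT : IsOpen T) :
    ∀ S₀ ∈ T, ∃ 𝒢 : Finset (Set (HypF X)),
      (∀ B ∈ 𝒢, S₀ ∈ B ∧ B ∈ vgen X) ∧ {S | ∀ B ∈ 𝒢, S ∈ B} ⊆ T := by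
  classical
  have hT' : TopologicalSpace.GenerateOpen (vgen X) T := hT
  clear hT
  induction hT' with
  | basic B hB =>
      intro S₀ hS₀
      refine ⟨{B}, ?_, ?_⟩
      · intro B' hB'
        rw [Finset.mem_singleton] at hB'
        subst hB'
        exact ⟨hS₀, hB⟩
      · intro S hS
        exact hS B (Finset.mem_singleton_self B)
  | univ =>
      intro S₀ _
      exact ⟨∅, by simp, fun S _ => trivial⟩
  | inter T₁ T₂ h₁ h₂ ih₁ ih₂ =>
      intro S₀ hS₀
      obtain ⟨G₁, hG₁, hsub₁⟩ := ih₁ S₀ hS₀.1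
      obtain ⟨G₂, hG₂, hsub₂⟩ := ih₂ S₀ hS₀.2
      refine ⟨G₁ ∪ G₂, ?_, ?_⟩
      · intro B hB
        rcases Finset.mem_union.mp hB with h | h
        exacts [hG₁ B h, hG₂ B h]
      · intro S hS
        exact ⟨hsub₁ (fun B hB => hS B (Finset.mem_union_left _ hB)),
               hsub₂ (fun B hB => hS B (Finset.mem_union_right _ hB))⟩
  | sUnion 𝔖 h ih =>
      intro S₀ hS₀
      obtain ⟨t, ht, hSt⟩ := hS₀
      obtain ⟨G, hG, hsub⟩ := ih t ht S₀ hSt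
      exact ⟨G, hG, fun S hS => ⟨t, ht, hsub hS⟩⟩

/-- Continuity of `f` at a point of the hyperspace, extracted into basic data. -/
lemma cont_at (f : HypF X → X) (hf : Continuous f) (S₀ : HypF X) {W : Set X}
    (hW : IsOpen W) (hfW : f S₀ ∈ W) :
    ∃ 𝒢 : Finset (Set (HypF X)), (∀ B ∈ 𝒢, S₀ ∈ B ∧ B ∈ vgen X) ∧
      ∀ S : HypF X, (∀ B ∈ 𝒢, S ∈ B) → f S ∈ W := by
  obtain ⟨𝒢, h1, h2⟩ := exists_basic (hW.preimage hf) S₀ hfW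
  exact ⟨𝒢, h1, fun S hS => h2 hS⟩

/-- Constructor that keeps the `HypF X` type (and hence its topology instance). -/
def mkH (s : Set X) (h₁ : s.Nonempty) (h₂ : IsClosed s) : HypF X := ⟨s, h₁, h₂⟩

@[simp] lemma mkH_val (s : Set X) (h₁ : s.Nonempty) (h₂ : IsClosed s) :
    (mkH s h₁ h₂).1 = s := rfl

lemma insert_closed [T1Space X] {D : Set X} (hD : IsClosed D) (z : X) :
    IsClosed (insert z D) := by
  rw [Set.insert_eq]; exact (isClosed_singleton).union hD

/-- Adjoining a point to a fixed closed set is Vietoris continuous. -/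
lemma addPoint_continuous [T1Space X] (D : Set X) (hD : IsClosed D) (hDne : D.Nonempty) :
    Continuous (fun z : X =>
      mkH (insert z D) (Set.insert_nonempty z D) (insert_closed hD z)) := by
  classical
  have key : ∀ B ∈ vgen X, IsOpen ((fun z : X =>
      mkH (insert z D) (Set.insert_nonempty z D) (insert_closed hD z)) ⁻¹' B) := by
    rintro B ⟨𝒱, hop, rfl⟩
    by_cases hcov : D ⊆ ⋃ V ∈ 𝒱, V
    · have heq : (fun z : X =>
          mkH (insert z D) (Set.insert_nonempty z D) (insert_closed hD z)) ⁻¹'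
          {S : HypF X | S.1 ⊆ (⋃ V ∈ 𝒱, V) ∧ ∀ V ∈ 𝒱, (S.1 ∩ V).Nonempty}
          = (⋃ V ∈ 𝒱, V) ∩ ⋂ V ∈ 𝒱, {z | (D ∩ V).Nonempty ∨ z ∈ V} := by
        ext z
        simp only [mem_preimage, mem_setOf_eq, mem_inter_iff, mem_iInter, mkH_val]
        constructor
        · rintro ⟨h1, h2⟩
          refine ⟨h1 (mem_insert z D), fun V hV => ?_⟩
          obtain ⟨y, hy1, hy2⟩ := h2 V hV
          rcases hy1 with rfl | hy1
          · exact Or.inr hy2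
          · exact Or.inl ⟨y, hy1, hy2⟩
        · rintro ⟨h1, h2⟩
          refine ⟨insert_subset h1 hcov, fun V hV => ?_⟩
          rcases h2 V hV with ⟨y, hy1, hy2⟩ | hz
          · exact ⟨y, Or.inr hy1, hy2⟩
          · exact ⟨z, mem_insert z D, hz⟩
      rw [heq]
      refine (isOpen_biUnion fun V hV => hop V hV).inter
        (isOpen_biInter_finset fun V hV => ?_)
      by_cases h : (D ∩ V).Nonempty
      · have h2 : {z : X | (D ∩ V).Nonempty ∨ z ∈ V} = univ := by
          ext z; simp [h]
        rw [h2]; exact isOpen_univ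
      · have h2 : {z : X | (D ∩ V).Nonempty ∨ z ∈ V} = V := by
          ext z; simp [h]
        rw [h2]; exact hop V hV
    · have heq : (fun z : X =>
          mkH (insert z D) (Set.insert_nonempty z D) (insert_closed hD z)) ⁻¹'
          {S : HypF X | S.1 ⊆ (⋃ V ∈ 𝒱, V) ∧ ∀ V ∈ 𝒱, (S.1 ∩ V).Nonempty} = ∅ := by
        ext z
        simp only [mem_preimage, mem_setOf_eq, mem_empty_iff_false, iff_false, mkH_val]
        rintro ⟨h1, _⟩
        exact hcov ((subset_insert z D).trans h1)
      rw [heq]; exact isOpen_empty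
  exact continuous_generateFrom_iff.mpr key

/-- Combining finitely many "eventual" levels. -/
lemma combine_levels {α : Type*} (s : Finset α) (P : ℕ → α → Prop)
    (hmono : ∀ (a : α) {m n : ℕ}, m ≤ n → P m a → P n a)
    (h : ∀ a ∈ s, ∃ m, P m a) : ∃ M, ∀ a ∈ s, P M a := by
  classical
  induction s using Finset.induction_on with
  | empty => exact ⟨0, by simp⟩
  | @insert a s ha ih =>
      obtain ⟨M₁, hM₁⟩ := ih (fun b hb => h b (Finset.mem_insert_of_mem hb))
      obtain ⟨m, hm⟩ := h a (Finset.mem_insert_self a s)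
      refine ⟨max m M₁, fun b hb => ?_⟩
      rcases Finset.mem_insert.mp hb with rfl | hb
      · exact hmono b (le_max_left _ _) hm
      · exact hmono b (le_max_right _ _) (hM₁ b hb)


section Main

variable (f : HypF X → X) (p : X) (O : ℕ → Set X)

/-- The key "kill" lemma: since `f(X) = p` and `p` is not isolated, every closed set
containing a sufficiently large co-level set `(O M)ᶜ` has `f`-value in a given
neighbourhood of `p`. -/
lemma kill [Nonempty X] (hf : IsContinuousSelection f)
    (hp : f (HypF.top X) = p) (hnp : ¬ IsOpen ({p} : Set X))
    (hanti : ∀ {m n : ℕ}, m ≤ n → O n ⊆ O m)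
    (hesc : ∀ x : X, x ≠ p → ∃ m, x ∉ O m)
    {W : Set X} (hW : IsOpen W) (hpW : p ∈ W) :
    ∃ M, ∀ S : HypF X, (O M)ᶜ ⊆ S.1 → f S ∈ W := by
  classical
  have hfW : f (HypF.top X) ∈ W := by rw [hp]; exact hpW
  obtain ⟨𝒢, hmem, hval⟩ := cont_at f hf.1 (HypF.top X) hW hfW
  have key : ∀ B ∈ 𝒢, ∃ M, ∀ S : HypF X, (O M)ᶜ ⊆ S.1 → S ∈ B := by
    intro B hB
    obtain ⟨h0, hBgen⟩ := hmem B hB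
    obtain ⟨𝒱, hop, rfl⟩ := hBgen
    obtain ⟨hcov, hhit⟩ := h0
    have hcov' : (⋃ V ∈ 𝒱, V) = univ := by
      apply eq_univ_of_univ_subset
      exact hcov
    have hlev : ∀ V ∈ 𝒱, ∃ m, ((O m)ᶜ ∩ V).Nonempty := by
      intro V hV
      have hVne : V.Nonempty := by
        have := hhit V hV
        obtain ⟨y, _, hy⟩ := this
        exact ⟨y, hy⟩
      have hVp : ∃ x ∈ V, x ≠ p := by
        by_contra hcon
        push_neg at hcon
        have : V = {p} := by
          apply Subset.antisymm
          · intro x hx; exact hcon x hx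
          · intro x hx
            rw [mem_singleton_iff] at hx
            obtain ⟨y, hy⟩ := hVne
            have := hcon y hy
            subst this; subst hx; exact hy
        exact hnp (this ▸ hop V hV)
      obtain ⟨x, hxV, hxp⟩ := hVp
      obtain ⟨m, hm⟩ := hesc x hxp
      exact ⟨m, x, hm, hxV⟩
    obtain ⟨M, hM⟩ := combine_levels 𝒱 (fun m V => ((O m)ᶜ ∩ V).Nonempty)
      (fun V {m n} hmn hPm => hPm.mono (inter_subset_inter_left _
        (compl_subset_compl.mpr (hanti hmn)))) hlev
    refine ⟨M, fun S hS => ?_⟩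
    constructor
    · rw [hcov']; exact subset_univ _
    · intro V hV
      obtain ⟨y, hy1, hy2⟩ := hM V hV
      exact ⟨y, hS hy1, hy2⟩
  obtain ⟨M, hM⟩ := combine_levels 𝒢
    (fun m B => ∀ S : HypF X, (O m)ᶜ ⊆ S.1 → S ∈ B)
    (fun B {m n} hmn hPm S hSn => hPm S ((compl_subset_compl.mpr (hanti hmn)).trans hSn))
    key
  exact ⟨M, fun S hS => hval S (fun B hB => hM B hB S hS)⟩

end Main


/-- `A ∪ Φ` as an element of the hyperspace. -/
def joinF [T1Space X] (A : Set X) (hA : IsClosed A) (hAne : A.Nonempty) (Φ : Finset X) :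
    HypF X :=
  mkH (A ∪ ↑Φ) (hAne.mono subset_union_left) (hA.union (Φ.finite_toSet.isClosed))

@[simp] lemma joinF_val [T1Space X] (A : Set X) (hA : IsClosed A) (hAne : A.Nonempty)
    (Φ : Finset X) : (joinF A hA hAne Φ).1 = A ∪ ↑Φ := rfl

/-- The central construction: a clopen "piece" of beaters at level `n`. -/
lemma piece [T1Space X] [Nonempty X] (f : HypF X → X) (p : X) (O : ℕ → Set X)
    (hf : IsContinuousSelection f)
    (hp : f (HypF.top X) = p) (hnp : ¬ IsOpen ({p} : Set X))
    (hclo : ∀ n, IsClopen (O n))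
    (hanti : ∀ {m n : ℕ}, m ≤ n → O n ⊆ O m)
    (hOp : ∀ n, p ∈ O n)
    (hesc : ∀ x : X, x ≠ p → ∃ m, x ∉ O m)
    (n : ℕ) (hne : (O n)ᶜ.Nonempty) :
    ∃ (E : Set X) (ψ : X), IsClopen E ∧ ψ ∈ E ∧ p ∉ E ∧ E ⊆ O n ∧
      ∀ z ∈ E, ∃ S : HypF X, (O n)ᶜ ⊆ S.1 ∧ f S = z := by
  classical
  have hOcl : IsClosed (O n)ᶜ := (hclo n).compl.isClosed
  -- ### Step 1: a finite "beater" exists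
  have hBex : ∃ Φ : Finset X, p ∉ Φ ∧ f (joinF (O n)ᶜ hOcl hne Φ) ∈ O n := by
    obtain ⟨M₀, hM₀⟩ := kill f p O hf hp hnp (fun {m k} h => hanti h) hesc
      (hclo n).isOpen (hOp n)
    set t := max n M₀ with ht
    have hnt : n ≤ t := le_max_left _ _
    have hMt : M₀ ≤ t := le_max_right _ _
    have hsubnt : (O n)ᶜ ⊆ (O t)ᶜ := compl_subset_compl.mpr (hanti hnt)
    have hsubMt : (O M₀)ᶜ ⊆ (O t)ᶜ := compl_subset_compl.mpr (hanti hMt)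
    set S₀ : HypF X := mkH (O t)ᶜ (hne.mono hsubnt) (hclo t).compl.isClosed with hS₀
    have hfS₀ : f S₀ ∈ O n := hM₀ S₀ hsubMt
    obtain ⟨𝒢, hmem, hval⟩ := cont_at f hf.1 S₀ (hclo n).isOpen hfS₀
    have h1 : ∀ B ∈ 𝒢, ∃ 𝒱 : Finset (Set X), (∀ V ∈ 𝒱, IsOpen V) ∧
        B = {S : HypF X | S.1 ⊆ (⋃ V ∈ 𝒱, V) ∧ ∀ V ∈ 𝒱, (S.1 ∩ V).Nonempty} :=
      fun B hB => (hmem B hB).2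
    choose! 𝒱f hop hBeq using h1
    set F : Finset (Set X) := 𝒢.sup 𝒱f with hF
    have hFmem : ∀ V ∈ F, ∃ B ∈ 𝒢, V ∈ 𝒱f B := fun V hV => Finset.mem_sup.mp hV
    set w : Set X → X := fun V => if h : (S₀.1 ∩ V).Nonempty then h.choose else hne.choose
      with hw
    have hwmem : ∀ V ∈ F, w V ∈ S₀.1 ∩ V := by
      intro V hV
      obtain ⟨B, hB, hVB⟩ := hFmem V hV
      have hS₀B := (hmem B hB).1
      rw [hBeq B hB] at hS₀B
      have hhit := hS₀B.2 V hVB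
      simp only [hw]
      rw [dif_pos hhit]
      exact hhit.choose_spec
    set Φ₀ : Finset X := (F.image w).filter (· ∈ O n) with hΦ₀
    have hΦ₀sub : (↑Φ₀ : Set X) ⊆ S₀.1 := by
      intro x hx
      simp only [hΦ₀, Finset.coe_filter, mem_setOf_eq, Finset.mem_image] at hx
      obtain ⟨⟨V, hV, rfl⟩, _⟩ := hx
      exact (hwmem V hV).1
    have hS'mem : ∀ B ∈ 𝒢, joinF (O n)ᶜ hOcl hne Φ₀ ∈ B := by
      intro B hB
      rw [hBeq B hB]
      have hS₀B := (hmem B hB).1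
      rw [hBeq B hB] at hS₀B
      constructor
      · refine subset_trans ?_ hS₀B.1
        rw [joinF_val]
        exact union_subset hsubnt hΦ₀sub
      · intro V hV
        have hVF : V ∈ F := Finset.mem_sup.mpr ⟨B, hB, hV⟩
        have hwV := hwmem V hVF
        refine ⟨w V, ?_, hwV.2⟩
        rw [joinF_val]
        by_cases hO : w V ∈ O n
        · right
          simp only [hΦ₀, Finset.coe_filter, mem_setOf_eq, Finset.mem_image]
          exact ⟨⟨V, hVF, rfl⟩, hO⟩
        · exact Or.inl hO
    refine ⟨Φ₀, ?_, hval _ hS'mem⟩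
    intro hpΦ
    have : (p : X) ∈ (↑Φ₀ : Set X) := hpΦ
    have hpS₀ := hΦ₀sub this
    simp only [hS₀, mkH_val, mem_compl_iff] at hpS₀
    exact hpS₀ (hOp t)
  -- ### Step 2: minimal-cardinality beater
  have hcard : ∃ c : ℕ, ∃ Φ : Finset X,
      (p ∉ Φ ∧ f (joinF (O n)ᶜ hOcl hne Φ) ∈ O n) ∧ Φ.card = c := by
    obtain ⟨Φ, h⟩ := hBex
    exact ⟨Φ.card, Φ, h, rfl⟩
  obtain ⟨Φm, hBm, hcm⟩ := Nat.find_spec hcard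
  have hmin : ∀ Φ' : Finset X, (p ∉ Φ' ∧ f (joinF (O n)ᶜ hOcl hne Φ') ∈ O n) →
      Nat.find hcard ≤ Φ'.card :=
    fun Φ' h' => Nat.find_min' hcard ⟨Φ', h', rfl⟩
  -- ### Step 3: the distinguished value ψ
  set ψ : X := f (joinF (O n)ᶜ hOcl hne Φm) with hψ
  have hψO : ψ ∈ O n := hBm.2
  have hψΦ : ψ ∈ Φm := by
    have hsel := hf.2 (joinF (O n)ᶜ hOcl hne Φm)
    rw [joinF_val] at hsel
    rcases hsel with h | h
    · exact absurd hψO h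
    · exact h
  have hψp : ψ ≠ p := fun h => hBm.1 (h ▸ hψΦ)
  -- ### Step 4: the depth window of ψ
  have hEx : ∃ b, ψ ∉ O b := hesc ψ hψp
  set b₀ := Nat.find hEx with hb₀
  have hψb₀ : ψ ∉ O b₀ := Nat.find_spec hEx
  have hnb : n < b₀ := by
    by_contra hcon
    push_neg at hcon
    exact hψb₀ (hanti hcon hψO)
  set a := b₀ - 1 with ha
  have hab : a + 1 = b₀ := by omega
  have hna : n ≤ a := by omega
  have hψa : ψ ∈ O a := by
    by_contra hcon
    exact Nat.find_min hEx (by omega) hcon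
  have hψa1 : ψ ∉ O (a + 1) := hab ▸ hψb₀
  set Wn : Set X := O a \ O (a + 1) with hWn
  have hWncl : IsClopen Wn := (hclo a).diff (hclo (a + 1))
  have hψWn : ψ ∈ Wn := ⟨hψa, hψa1⟩
  have hWnO : Wn ⊆ O n := fun x hx => hanti hna hx.1
  -- ### Step 5: the test map χ
  set D : Set X := (O n)ᶜ ∪ (↑Φm \ {ψ}) with hD
  have hDcl : IsClosed D :=
    hOcl.union ((Φm.finite_toSet.subset diff_subset).isClosed)
  have hDne : D.Nonempty := hne.mono subset_union_left
  set g : X → HypF X := fun z =>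
    mkH (insert z D) (Set.insert_nonempty z D) (insert_closed hDcl z) with hg
  have hgcont : Continuous g := addPoint_continuous D hDcl hDne
  set χ : X → X := fun z => f (g z) with hχ
  have hχcont : Continuous χ := hf.1.comp hgcont
  -- value of f on D itself is not deep
  have hDnotO : f (mkH D hDne hDcl) ∉ O n := by
    intro hcon
    have hDe : D = (O n)ᶜ ∪ ↑(Φm.erase ψ) := by
      rw [hD, Finset.coe_erase]
    have heq : mkH D hDne hDcl = joinF (O n)ᶜ hOcl hne (Φm.erase ψ) := by
      apply Subtype.ext
      rw [mkH_val, joinF_val, hDe]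
    rw [heq] at hcon
    have hperase : p ∉ Φm.erase ψ := fun h => hBm.1 (Finset.mem_of_mem_erase h)
    have hle := hmin (Φm.erase ψ) ⟨hperase, hcon⟩
    rw [Finset.card_erase_of_mem hψΦ, hcm] at hle
    have hpos : 0 < Φm.card := Finset.card_pos.mpr ⟨ψ, hψΦ⟩
    omega
  -- χ fixes points of D-extension type; key claim
  set E : Set X := (Wn ∩ χ ⁻¹' Wn) ∩ χ ⁻¹' (χ ⁻¹' Wn) with hE
  have hEclo : IsClopen E :=
    (hWncl.inter (hWncl.preimage hχcont)).inter
      ((hWncl.preimage hχcont).preimage hχcont)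
  have claim2 : ∀ z ∈ E, χ z = z := by
    rintro z ⟨⟨hz1, hz2⟩, hz3⟩
    have hv := hf.2 (g z)
    have hv' : χ z ∈ insert z D := hv
    rcases hv' with h | h
    · exact h
    · exfalso
      rcases h with h | h
      · exact h (hWnO hz2)
      · -- χ z is a "mate" in Φm \ {ψ}; then χ (χ z) = f D ∉ O n
        have hins : insert (χ z) D = D := insert_eq_self.mpr (Or.inr h)
        have hgeq : g (χ z) = mkH D hDne hDcl := by
          apply Subtype.ext
          simp only [hg, mkH_val]
          exact hins
        have hstep : χ (χ z) = f (g (χ z)) := rfl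
        rw [hgeq] at hstep
        have hz3' : χ (χ z) ∈ Wn := hz3
        rw [hstep] at hz3'
        exact hDnotO (hWnO hz3')
  have hψE : ψ ∈ E := by
    have hinsψ : insert ψ D = (O n)ᶜ ∪ ↑Φm := by
      rw [hD, ← union_insert, Set.insert_diff_singleton]
      congr 1
      exact insert_eq_self.mpr (Finset.mem_coe.mpr hψΦ)
    have hgψ : g ψ = joinF (O n)ᶜ hOcl hne Φm := by
      apply Subtype.ext
      simp only [hg, mkH_val, joinF_val]
      exact hinsψ
    have hχψ : χ ψ = ψ := by
      have hstep : χ ψ = f (g ψ) := rfl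
      rw [hgψ] at hstep
      exact hstep.trans hψ.symm
    refine ⟨⟨hψWn, ?_⟩, ?_⟩
    · simpa [hχψ] using hψWn
    · simp only [mem_preimage, hχψ]
      simpa [hχψ] using hψWn
  have hpE : p ∉ E := by
    rintro ⟨⟨hp1, _⟩, _⟩
    exact hp1.2 (hOp (a + 1))
  have hEO : E ⊆ O n := fun x hx => hWnO hx.1.1
  refine ⟨E, ψ, hEclo, hψE, hpE, hEO, ?_⟩
  intro z hz
  refine ⟨g z, ?_, ?_⟩
  · have : (O n)ᶜ ⊆ D := subset_union_left
    exact this.trans (subset_insert z D)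
  · exact claim2 z hz


/-- Assembling the pieces on one side of the cut into a countable clopen base. -/
lemma assemble (f : HypF X → X) (p : X) (O : ℕ → Set X)
    (hclo : ∀ n, IsClopen (O n))
    (hanti : ∀ {m n : ℕ}, m ≤ n → O n ⊆ O m)
    (hOp : ∀ n, p ∈ O n)
    (hesc : ∀ x : X, x ≠ p → ∃ m, x ∉ O m)
    (hkill : ∀ W : Set X, IsOpen W → p ∈ W →
      ∃ M, ∀ S : HypF X, (O M)ᶜ ⊆ S.1 → f S ∈ W)
    (N₀ : ℕ)
    (U : Set X) (hUo : IsOpen U) (hpU : p ∉ U) (hclU : closure U ⊆ U ∪ {p})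
    (E : ℕ → Set X) (ψ : ℕ → X)
    (hE : ∀ n, N₀ ≤ n → IsClopen (E n) ∧ ψ n ∈ E n ∧ p ∉ E n ∧ E n ⊆ O n ∧
      ∀ z ∈ E n, ∃ S : HypF X, (O n)ᶜ ⊆ S.1 ∧ f S = z)
    (hS : {n : ℕ | N₀ ≤ n ∧ ψ n ∈ U}.Infinite) :
    CountablyApproachable p := by
  classical
  set G : ℕ → Set X := fun n => if N₀ ≤ n then E n ∩ U else ∅ with hG
  have hGclo : ∀ n, IsClopen (G n) := by
    intro n
    by_cases hn : N₀ ≤ n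
    · simp only [hG, if_pos hn]
      obtain ⟨hEc, _, hpE, _, _⟩ := hE n hn
      constructor
      · have heq : E n ∩ U = E n ∩ closure U := by
          apply Subset.antisymm
          · exact inter_subset_inter_right _ subset_closure
          · rintro x ⟨hx1, hx2⟩
            rcases hclU hx2 with h | h
            · exact ⟨hx1, h⟩
            · rw [mem_singleton_iff] at h; subst h; exact absurd hx1 hpE
        rw [heq]; exact hEc.isClosed.inter isClosed_closure
      · exact hEc.isOpen.inter hUo
    · simp only [hG, if_neg hn]; exact isClopen_empty
  have hGsub : ∀ n, G n ⊆ O n := by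
    intro n
    by_cases hn : N₀ ≤ n
    · simp only [hG, if_pos hn]
      exact (inter_subset_left).trans (hE n hn).2.2.2.1
    · simp only [hG, if_neg hn]; exact empty_subset _
  have hGU : ∀ n, G n ⊆ U := by
    intro n
    by_cases hn : N₀ ≤ n
    · simp only [hG, if_pos hn]; exact inter_subset_right
    · simp only [hG, if_neg hn]; exact empty_subset _
  have hGp : ∀ n, p ∉ G n := fun n h => hpU (hGU n h)
  have hGbeat : ∀ n, ∀ z ∈ G n, ∃ S : HypF X, (O n)ᶜ ⊆ S.1 ∧ f S = z := by
    intro n z hz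
    by_cases hn : N₀ ≤ n
    · simp only [hG, if_pos hn] at hz
      exact (hE n hn).2.2.2.2 z hz.1
    · simp only [hG, if_neg hn] at hz; exact absurd hz (notMem_empty z)
  set U₀ : Set X := ⋃ n, G n with hU₀
  have hU₀o : IsOpen U₀ := isOpen_iUnion (fun n => (hGclo n).isOpen)
  have hU₀p : U₀ ⊆ ({p}ᶜ : Set X) := by
    intro x hx
    obtain ⟨n, hn⟩ := mem_iUnion.mp hx
    intro hxp
    rw [mem_singleton_iff] at hxp; subst hxp
    exact hGp n hn
  have hcov : ∀ W : Set X, IsOpen W → p ∈ W → ∃ M, ∀ n, M ≤ n → G n ⊆ W := by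
    intro W hW hpW
    obtain ⟨M, hM⟩ := hkill W hW hpW
    refine ⟨M, fun n hn z hz => ?_⟩
    obtain ⟨S, hS1, hS2⟩ := hGbeat n z hz
    have hsub : (O M)ᶜ ⊆ S.1 := (compl_subset_compl.mpr (hanti hn)).trans hS1
    rw [← hS2]; exact hM S hsub
  have hbig : ∀ a : ℕ, ∃ b, (N₀ ≤ b ∧ ψ b ∈ U) ∧ a ≤ b := by
    intro a
    by_contra h
    push_neg at h
    refine hS (Set.Finite.subset (Set.finite_Iio a) ?_)
    intro x hx
    exact h x hx
  have hψG : ∀ n, N₀ ≤ n → ψ n ∈ U → ψ n ∈ G n := by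
    intro n hn hU'
    simp only [hG, if_pos hn]
    exact ⟨(hE n hn).2.1, hU'⟩
  have hpcl : p ∈ closure U₀ := by
    rw [mem_closure_iff]
    intro W hW hpW
    obtain ⟨M, hM⟩ := hcov W hW hpW
    obtain ⟨b, ⟨hb1, hb2⟩, hb3⟩ := hbig M
    exact ⟨ψ b, hM b hb3 (hψG b hb1 hb2), mem_iUnion.mpr ⟨b, hψG b hb1 hb2⟩⟩
  have hclU₀ : closure U₀ = U₀ ∪ {p} := by
    apply Subset.antisymm
    · intro q hq
      by_cases hqp : q = p
      · exact Or.inr (by rw [hqp]; exact rfl)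
      · left
        by_contra hqU
        obtain ⟨m, hm⟩ := hesc q hqp
        set N : Set X := (O m)ᶜ ∩ ⋂ k ∈ Finset.range m, (G k)ᶜ with hN
        have hNo : IsOpen N := (hclo m).compl.isOpen.inter
          (isOpen_biInter_finset (fun k _ => (hGclo k).isClosed.isOpen_compl))
        have hqN : q ∈ N := by
          refine ⟨hm, ?_⟩
          simp only [mem_iInter, mem_compl_iff]
          intro k _
          exact fun hk => hqU (mem_iUnion.mpr ⟨k, hk⟩)
        rw [mem_closure_iff] at hq
        obtain ⟨x, hx1, hx2⟩ := hq N hNo hqN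
        obtain ⟨j, hj⟩ := mem_iUnion.mp hx2
        by_cases hjm : j < m
        · have := mem_iInter.mp (hx1.2) j
          simp only [mem_iInter, mem_compl_iff] at this
          exact this (Finset.mem_range.mpr hjm) hj
        · push_neg at hjm
          exact hx1.1 (hanti hjm (hGsub j hj))
    · rintro x (h | h)
      · exact subset_closure h
      · rw [mem_singleton_iff] at h; subst h; exact hpcl
  refine Or.inr ⟨U₀, hU₀o, hU₀p, hclU₀, ?_⟩
  intro hpc
  set Bs : ℕ → Set X := fun i => {p} ∪ ⋃ n, ⋃ (_ : i ≤ n), G n with hBs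
  have hBsp : ∀ i, p ∈ Bs i := fun i => Or.inl rfl
  have hBsub : ∀ i, Bs i ⊆ closure U₀ := by
    intro i x hx
    rcases hx with h | h
    · rw [mem_singleton_iff] at h; subst h; exact hpc
    · obtain ⟨n, hn⟩ := mem_iUnion.mp h
      obtain ⟨_, hn2⟩ := mem_iUnion.mp hn
      exact subset_closure (mem_iUnion.mpr ⟨n, hn2⟩)
  have hBcl : ∀ i, IsClosed (Bs i) := by
    intro i
    rw [← closure_subset_iff_isClosed]
    intro q hq
    by_cases hqp : q = p
    · exact Or.inl (by rw [hqp]; exact rfl)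
    · right
      by_contra hqB
      have hqB' : ∀ n, i ≤ n → q ∉ G n := by
        intro n hn hqn
        exact hqB (mem_iUnion.mpr ⟨n, mem_iUnion.mpr ⟨hn, hqn⟩⟩)
      obtain ⟨m, hm⟩ := hesc q hqp
      set N : Set X := (O m)ᶜ ∩ ⋂ k ∈ (Finset.range m).filter (i ≤ ·), (G k)ᶜ with hN
      have hNo : IsOpen N := (hclo m).compl.isOpen.inter
        (isOpen_biInter_finset (fun k _ => (hGclo k).isClosed.isOpen_compl))
      have hqN : q ∈ N := by
        refine ⟨hm, ?_⟩
        simp only [mem_iInter, mem_compl_iff, Finset.mem_filter, Finset.mem_range]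
        rintro k ⟨_, hk2⟩
        exact hqB' k hk2
      rw [mem_closure_iff] at hq
      obtain ⟨x, hx1, hx2⟩ := hq N hNo hqN
      rcases hx2 with h | h
      · rw [mem_singleton_iff] at h; subst h
        exact hx1.1 (hOp m)
      · obtain ⟨j, hj⟩ := mem_iUnion.mp h
        obtain ⟨hij, hj2⟩ := mem_iUnion.mp hj
        by_cases hjm : j < m
        · have := mem_iInter.mp hx1.2 j
          simp only [mem_iInter, mem_compl_iff, Finset.mem_filter, Finset.mem_range] at this
          exact this ⟨hjm, hij⟩ hj2
        · push_neg at hjm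
          exact hx1.1 (hanti hjm (hGsub j hj2))
  have hsubcl : ∀ i, IsClosed (Subtype.val ⁻¹' (Bs i) : Set (closure U₀)) :=
    fun i => (hBcl i).preimage continuous_subtype_val
  have hsubop : ∀ i, IsOpen (Subtype.val ⁻¹' (Bs i) : Set (closure U₀)) := by
    intro i
    set C : Set X := (⋃ k ∈ Finset.range i, G k) ∩ (⋃ n, ⋃ (_ : i ≤ n), G n)ᶜ with hC
    have hCcl : IsClosed C := by
      refine IsClosed.inter ?_ ?_
      · exact (Finset.range i).finite_toSet.isClosed_biUnion
          (fun k _ => (hGclo k).isClosed)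
      · exact (isOpen_iUnion (fun n => isOpen_iUnion
          (fun _ => (hGclo n).isOpen))).isClosed_compl
    have hcompl : (Subtype.val ⁻¹' (Bs i) : Set (closure U₀))ᶜ
        = (Subtype.val ⁻¹' C : Set (closure U₀)) := by
      ext x
      obtain ⟨x, hx⟩ := x
      simp only [mem_compl_iff, mem_preimage]
      rw [hclU₀] at hx
      constructor
      · intro hxB
        rcases hx with hxU | hxp
        · have hxt : x ∉ ⋃ n, ⋃ (_ : i ≤ n), G n := fun h => hxB (Or.inr h)
          obtain ⟨j, hj⟩ := mem_iUnion.mp hxU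
          have hji : j < i := by
            by_contra hcon
            push_neg at hcon
            exact hxt (mem_iUnion.mpr ⟨j, mem_iUnion.mpr ⟨hcon, hj⟩⟩)
          refine ⟨?_, hxt⟩
          exact mem_biUnion (Finset.mem_range.mpr hji) hj
        · rw [mem_singleton_iff] at hxp; subst hxp
          exact absurd (Or.inl rfl) hxB
      · rintro ⟨hx1, hx2⟩ hxB
        rcases hxB with hxp | hxt
        · rw [mem_singleton_iff] at hxp; subst hxp
          simp only [mem_iUnion] at hx1
          obtain ⟨k, _, hk2⟩ := hx1
          exact hGp k hk2
        · exact hx2 hxt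
    rw [← isClosed_compl_iff, hcompl]
    exact hCcl.preimage continuous_subtype_val
  refine ⟨Set.range (fun i : ℕ => (Subtype.val ⁻¹' (Bs i) : Set (closure U₀))),
    countable_range _, ?_, ?_⟩
  · rintro B ⟨i, rfl⟩
    exact ⟨⟨hsubcl i, hsubop i⟩, by simpa using hBsp i⟩
  · intro W hW hpW
    obtain ⟨W', hW', hWeq⟩ := isOpen_induced_iff.mp hW
    have hpW' : p ∈ W' := by
      have : (⟨p, hpc⟩ : closure U₀) ∈ Subtype.val ⁻¹' W' := by rw [hWeq]; exact hpW
      exact this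
    obtain ⟨M, hM⟩ := hcov W' hW' hpW'
    refine ⟨Subtype.val ⁻¹' (Bs M), ⟨M, rfl⟩, ?_⟩
    intro x hx
    rw [← hWeq]
    obtain ⟨x, hxcl⟩ := x
    simp only [mem_preimage] at hx ⊢
    rcases hx with h | h
    · rw [mem_singleton_iff] at h; subst h; exact hpW'
    · obtain ⟨n, hn⟩ := mem_iUnion.mp h
      obtain ⟨hin, hn2⟩ := mem_iUnion.mp hn
      exact hM n hin hn2

end Stmt14

/-- Let `f` be a continuous selection with `p = f(X)` a cut point
of `X`, and let `X` be totally disconnected at `p`. If `{p}` is a countable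
intersection of clopen subsets of `X`, then `p` is countably-approachable. -/
theorem statement14 (X : Type*) [TopologicalSpace X] [T2Space X] [Infinite X]
    (f : HypF X → X) (hf : IsContinuousSelection f)
    (p : X) (hp : f (HypF.top X) = p)
    (hcut : IsCutPoint p) (htd : TotallyDisconnectedAt p)
    (H : ℕ → Set X) (hclopen : ∀ n, IsClopen (H n)) (hH : (⋂ n, H n) = {p}) :
    CountablyApproachable p := by
  classical
  by_cases hiso : IsOpen ({p} : Set X)
  · exact Or.inl hiso
  set O : ℕ → Set X := fun n => ⋂ k ∈ Finset.range n, H k with hO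
  have hclo : ∀ n, IsClopen (O n) := fun n =>
    isClopen_biInter_finset (fun k _ => hclopen k)
  have hanti : ∀ {m n : ℕ}, m ≤ n → O n ⊆ O m := by
    intro m n hmn x hx
    simp only [hO, mem_iInter] at hx ⊢
    intro k hk
    exact hx k (Finset.mem_range.mpr (lt_of_lt_of_le (Finset.mem_range.mp hk) hmn))
  have hpH : ∀ k, p ∈ H k := by
    intro k
    have hmem : p ∈ ⋂ n, H n := by rw [hH]; exact rfl
    exact mem_iInter.mp hmem k
  have hOp : ∀ n, p ∈ O n := by
    intro n
    simp only [hO, mem_iInter]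
    intro k _
    exact hpH k
  have hesc : ∀ x : X, x ≠ p → ∃ m, x ∉ O m := by
    intro x hx
    have hnot : x ∉ ⋂ n, H n := by
      rw [hH]
      simpa using hx
    rw [mem_iInter] at hnot
    push_neg at hnot
    obtain ⟨k, hk⟩ := hnot
    refine ⟨k + 1, ?_⟩
    simp only [hO, mem_iInter]
    intro hmem
    exact hk (hmem k (Finset.mem_range.mpr (Nat.lt_succ_self k)))
  obtain ⟨x₀, hx₀⟩ := exists_ne p
  obtain ⟨N₀, hN₀⟩ := hesc x₀ hx₀
  have hne : ∀ n, N₀ ≤ n → (O n)ᶜ.Nonempty := fun n hn =>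
    ⟨x₀, fun hmem => hN₀ (hanti hn hmem)⟩
  obtain ⟨A, B, hAB, hclos⟩ := hcut
  have hpA : p ∈ closure A := by
    have hmem : p ∈ closure A ∩ closure B := by rw [hclos]; exact rfl
    exact hmem.1
  have hpB : p ∈ closure B := by
    have hmem : p ∈ closure A ∩ closure B := by rw [hclos]; exact rfl
    exact hmem.2
  have hsubA : A ⊆ ({p}ᶜ : Set X) := by rw [hAB]; exact subset_union_left
  have hsubB : B ⊆ ({p}ᶜ : Set X) := by rw [hAB]; exact subset_union_right
  have hpnA : p ∉ A := fun h => (hsubA h) rfl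
  have hpnB : p ∉ B := fun h => (hsubB h) rfl
  have hmeet : ∀ x, x ∈ closure A → x ∈ closure B → x = p := by
    intro x h1 h2
    have hmem : x ∈ closure A ∩ closure B := ⟨h1, h2⟩
    rw [hclos] at hmem
    exact hmem
  have hclA : closure A ⊆ A ∪ {p} := by
    intro q hq
    by_cases hqp : q = p
    · exact Or.inr (by rw [hqp]; exact rfl)
    · left
      have hqB : q ∉ closure B := fun h => hqp (hmeet q hq h)
      have hq' : q ∈ ({p}ᶜ : Set X) := hqp
      rw [hAB] at hq'
      rcases hq' with h | h
      · exact h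
      · exact absurd (subset_closure h) hqB
  have hclB : closure B ⊆ B ∪ {p} := by
    intro q hq
    by_cases hqp : q = p
    · exact Or.inr (by rw [hqp]; exact rfl)
    · left
      have hqA : q ∉ closure A := fun h => hqp (hmeet q h hq)
      have hq' : q ∈ ({p}ᶜ : Set X) := hqp
      rw [hAB] at hq'
      rcases hq' with h | h
      · exact absurd (subset_closure h) hqA
      · exact h
  have hAopen : IsOpen A := by
    have heq : A = (closure B)ᶜ := by
      apply Subset.antisymm
      · intro x hx hxB
        have hxp := hmeet x (subset_closure hx) hxB
        subst hxp
        exact hpnA hx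
      · intro x hx
        have hxp : x ≠ p := fun h => hx (h ▸ hpB)
        have hx' : x ∈ ({p}ᶜ : Set X) := hxp
        rw [hAB] at hx'
        rcases hx' with h | h
        · exact h
        · exact absurd (subset_closure h) hx
    rw [heq]
    exact isClosed_closure.isOpen_compl
  have hBopen : IsOpen B := by
    have heq : B = (closure A)ᶜ := by
      apply Subset.antisymm
      · intro x hx hxA
        have hxp := hmeet x hxA (subset_closure hx)
        subst hxp
        exact hpnB hx
      · intro x hx
        have hxp : x ≠ p := fun h => hx (h ▸ hpA)
        have hx' : x ∈ ({p}ᶜ : Set X) := hxp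
        rw [hAB] at hx'
        rcases hx' with h | h
        · exact absurd (subset_closure h) hx
        · exact h
    rw [heq]
    exact isClosed_closure.isOpen_compl
  have hkill : ∀ W : Set X, IsOpen W → p ∈ W →
      ∃ M, ∀ S : HypF X, (O M)ᶜ ⊆ S.1 → f S ∈ W := by
    intro W hW hpW
    exact Stmt14.kill f p O hf hp hiso (fun {m k} h => hanti h) hesc hW hpW
  have hpieces : ∀ n, N₀ ≤ n → ∃ (E : Set X) (ψ : X),
      IsClopen E ∧ ψ ∈ E ∧ p ∉ E ∧ E ⊆ O n ∧
      ∀ z ∈ E, ∃ S : HypF X, (O n)ᶜ ⊆ S.1 ∧ f S = z := by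
    intro n hn
    exact Stmt14.piece f p O hf hp hiso hclo (fun {m k} h => hanti h) hOp hesc n (hne n hn)
  choose! E ψfun hEall using hpieces
  have hpsi_ne : ∀ n, N₀ ≤ n → ψfun n ≠ p := fun n hn h =>
    (hEall n hn).2.2.1 (h ▸ (hEall n hn).2.1)
  have hcover : {n : ℕ | N₀ ≤ n} ⊆
      {n | N₀ ≤ n ∧ ψfun n ∈ A} ∪ {n | N₀ ≤ n ∧ ψfun n ∈ B} := by
    intro n hn
    have h1 : ψfun n ∈ ({p}ᶜ : Set X) := hpsi_ne n hn
    rw [hAB] at h1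
    rcases h1 with h | h
    · exact Or.inl ⟨hn, h⟩
    · exact Or.inr ⟨hn, h⟩
  have hinf : {n : ℕ | N₀ ≤ n}.Infinite := by
    have heq : {n : ℕ | N₀ ≤ n} = Set.Ici N₀ := rfl
    rw [heq]
    exact Set.Ici_infinite N₀
  have hone : {n | N₀ ≤ n ∧ ψfun n ∈ A}.Infinite ∨
      {n | N₀ ≤ n ∧ ψfun n ∈ B}.Infinite := by
    by_contra hc
    push_neg at hc
    obtain ⟨hc1, hc2⟩ := hc
    exact hinf (Set.Finite.subset (hc1.union hc2) hcover)
  rcases hone with hinfside | hinfside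
  · exact Stmt14.assemble f p O hclo (fun {m k} h => hanti h) hOp hesc hkill N₀
      A hAopen hpnA hclA E ψfun hEall hinfside
  · exact Stmt14.assemble f p O hclo (fun {m k} h => hanti h) hOp hesc hkill N₀
      B hBopen hpnB hclB E ψfun hEall hinfside
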